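/- Let 0 ≤ p_i ≤ 1 for i = 1,...,n be independent realizations, each a random variable stochastically dominating the uniform distribution on [0,1] (i.e., Pr[p_i ≤ u] ≤ u for all u ∈ [0,1]). Then the Fisher statistic F = -2 Σ_{i=1}^n log p_i satisfies Pr[F ≥ f] ≤ Pr[χ²_{2n} ≥ f] for every f ≥ 0. -/

import Mathlib

open MeasureTheory Nat

open MeasureTheory Nat

section FisherProof

open Real Set Filter

noncomputable section



/-- One term of the chi-squared tail sum. -/
def fTerm (k : ℕ) (f : ℝ) : ℝ := Real.exp (-f/2) * ((f/2)^k / k !)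

/-- Partial tail sum. -/
def fisherPhi (m : ℕ) (f : ℝ) : ℝ := ∑ k ∈ Finset.range m, fTerm k f

/-- The chi-squared (2m df) upper tail bound function, extended by 1 on nonpositives. -/
def fisherH (m : ℕ) (f : ℝ) : ℝ := if f ≤ 0 then 1 else fisherPhi m f

lemma fTerm_nonneg {k : ℕ} {f : ℝ} (hf : 0 ≤ f) : 0 ≤ fTerm k f := by
  unfold fTerm; positivity

lemma fisherPhi_nonneg {m : ℕ} {f : ℝ} (hf : 0 ≤ f) : 0 ≤ fisherPhi m f :=
  Finset.sum_nonneg fun _ _ => fTerm_nonneg hf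

lemma fisherPhi_zero (m : ℕ) : fisherPhi (m+1) 0 = 1 := by
  unfold fisherPhi
  rw [Finset.sum_range_succ']
  simp [fTerm]

lemma hasDerivAt_expNegHalf (f : ℝ) :
    HasDerivAt (fun f : ℝ => Real.exp (-f/2)) (-(Real.exp (-f/2))/2) f := by
  have h : HasDerivAt (fun f : ℝ => -f/2) (-(1:ℝ)/2) f := by
    simpa using (hasDerivAt_id f).neg.div_const 2
  have := h.exp
  convert this using 1
  ring

lemma hasDerivAt_fTerm_succ (k : ℕ) (f : ℝ) :
    HasDerivAt (fTerm (k+1)) (fTerm k f / 2 - fTerm (k+1) f / 2) f := by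
  have h2 : HasDerivAt (fun f : ℝ => ((f/2)^(k+1) / ((k+1)! : ℝ)))
      ((f/2)^k / (2 * (k ! : ℝ))) f := by
    have := (((hasDerivAt_id f).div_const 2).pow (k+1)).div_const ((k+1)! : ℝ)
    refine this.congr_deriv ?_
    have hf : ((k+1)! : ℝ) = (k+1) * (k !) := by
      rw [Nat.factorial_succ]; push_cast; ring
    rw [hf]
    simp only [id, Nat.add_sub_cancel]
    push_cast
    field_simp
  have := (hasDerivAt_expNegHalf f).mul h2
  refine this.congr_deriv ?_
  unfold fTerm
  field_simp
  ring

lemma hasDerivAt_fisherPhi (m : ℕ) (f : ℝ) :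
    HasDerivAt (fisherPhi (m+1)) (-(fTerm m f)/2) f := by
  induction m with
  | zero =>
    have h : fisherPhi 1 = fun f : ℝ => Real.exp (-f/2) := by
      funext g; simp [fisherPhi, fTerm]
    rw [h]
    convert hasDerivAt_expNegHalf f using 1
    norm_num [fTerm]
  | succ k ih =>
    have h : fisherPhi (k+2) = fun f => fisherPhi (k+1) f + fTerm (k+1) f := by
      funext g; simp [fisherPhi, Finset.sum_range_succ]
    rw [h]
    have := ih.add (hasDerivAt_fTerm_succ k f)
    refine this.congr_deriv ?_
    ring

lemma tendsto_fTerm_atTop (k : ℕ) : Tendsto (fTerm k) atTop (nhds 0) := by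
  have h : Tendsto (fun x : ℝ => x ^ k * Real.exp (-x)) atTop (nhds 0) :=
    tendsto_pow_mul_exp_neg_atTop_nhds_zero k
  have h2 : Tendsto (fun f : ℝ => f / 2) atTop atTop :=
    tendsto_id.atTop_div_const two_pos
  have h3 := (h.comp h2).div_const (k ! : ℝ)
  simp only [Function.comp] at h3
  convert h3 using 2 with f
  · unfold fTerm
    rw [neg_div]
    ring
  · simp

lemma tendsto_fisherPhi_atTop (m : ℕ) : Tendsto (fisherPhi m) atTop (nhds 0) := by
  have h : Tendsto (fun f => ∑ k ∈ Finset.range m, fTerm k f) atTop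
      (nhds (∑ k ∈ Finset.range m, (0:ℝ))) :=
    tendsto_finset_sum _ fun k _ => tendsto_fTerm_atTop k
  simp only [Finset.sum_const_zero] at h
  exact h

lemma continuous_fTerm (k : ℕ) : Continuous (fTerm k) := by
  unfold fTerm
  continuity

lemma integrableOn_fTerm (k : ℕ) (a : ℝ) : IntegrableOn (fTerm k) (Ioi a) := by
  have hc : ContinuousOn (fTerm k) (Ici a) := (continuous_fTerm k).continuousOn
  apply integrable_of_isBigO_exp_neg (b := (1/4 : ℝ)) (by norm_num) hc
  have key : Tendsto (fun x : ℝ => (x/2)^k / (k ! : ℝ) * Real.exp (-(x/4))) atTop (nhds 0) := by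
    have h1 := tendsto_pow_mul_exp_neg_atTop_nhds_zero k
    have h2 : Tendsto (fun x : ℝ => x/4) atTop atTop :=
      tendsto_id.atTop_div_const (by norm_num)
    have h3 := ((h1.comp h2).const_mul ((2:ℝ)^k / (k ! : ℝ)))
    simp only [Function.comp, mul_zero] at h3
    refine h3.congr fun x => ?_
    have h4 : (x/2)^k = (2:ℝ)^k * (x/4)^k := by
      rw [div_pow, div_pow]
      have h5 : (4:ℝ)^k = 2^k * 2^k := by rw [← mul_pow]; norm_num
      rw [h5]
      field_simp
    rw [h4]; ring
  rw [Asymptotics.isBigO_iff]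
  refine ⟨1, ?_⟩
  filter_upwards [key.eventually_le_const (by norm_num : (0:ℝ) < 1),
    eventually_ge_atTop (0:ℝ)] with x hx hx0
  rw [Real.norm_eq_abs, Real.norm_eq_abs, abs_of_nonneg (fTerm_nonneg hx0),
    abs_of_nonneg (Real.exp_pos _).le, one_mul]
  have hsplit : Real.exp (-x/2) = Real.exp (-(x/4)) * Real.exp (-(1/4)*x) := by
    rw [← Real.exp_add]; congr 1; ring
  unfold fTerm
  rw [hsplit]
  calc Real.exp (-(x/4)) * Real.exp (-(1/4)*x) * ((x/2)^k / (k ! : ℝ))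
      = ((x/2)^k / (k ! : ℝ) * Real.exp (-(x/4))) * Real.exp (-(1/4)*x) := by ring
    _ ≤ 1 * Real.exp (-(1/4)*x) := by
        exact mul_le_mul_of_nonneg_right hx (Real.exp_pos _).le
    _ = Real.exp (-(1/4)*x) := one_mul _

/-- Chi-squared tail integral identity. -/
lemma integral_fisher_tail (m : ℕ) (a : ℝ) :
    ∫ x in Ioi a, fTerm m x / 2 = fisherPhi (m+1) a := by
  have hderiv : ∀ x ∈ Ici a, HasDerivAt (fisherPhi (m+1)) (-(fTerm m x)/2) x :=
    fun x _ => hasDerivAt_fisherPhi m x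
  have hint : IntegrableOn (fun x => -(fTerm m x)/2) (Ioi a) := by
    have := ((integrableOn_fTerm m a).neg).div_const 2
    refine IntegrableOn.congr_fun (f := fun x => (-fTerm m) x / 2) this
      (fun x _ => by simp [neg_div]) measurableSet_Ioi
  have := integral_Ioi_of_hasDerivAt_of_tendsto' hderiv hint (tendsto_fisherPhi_atTop (m+1))
  have h2 : ∫ x in Ioi a, -(fTerm m x)/2 = - ∫ x in Ioi a, fTerm m x / 2 := by
    rw [← integral_neg]
    congr 1; funext x; ring
  rw [h2] at this
  linarith [this]



lemma integrableOn_exp_tail (a : ℝ) :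
    IntegrableOn (fun x : ℝ => Real.exp (-x/2) / 2) (Ioi a) := by
  have h := (exp_neg_integrableOn_Ioi a (by norm_num : (0:ℝ) < 1/2)).div_const 2
  have heq : (fun x : ℝ => Real.exp (-x/2)/2) = (fun x : ℝ => Real.exp (-(1/2)*x)/2) := by
    funext x; rw [show -x/2 = -(1/2)*x by ring]
  rw [IntegrableOn, heq]
  exact h

lemma integral_exp_tail (a : ℝ) :
    ∫ x in Ioi a, Real.exp (-x/2) / 2 = Real.exp (-a/2) := by
  have hderiv : ∀ x ∈ Ici a, HasDerivAt (fun y : ℝ => -Real.exp (-y/2)) (Real.exp (-x/2)/2) x := by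
    intro x _
    have h : HasDerivAt (fun f : ℝ => Real.exp (-f/2)) (-(Real.exp (-x/2))/2) x := by
      have h0 : HasDerivAt (fun f : ℝ => -f/2) (-(1:ℝ)/2) x := by
        simpa using (hasDerivAt_id x).neg.div_const 2
      have := h0.exp
      convert this using 1; ring
    have := h.neg
    refine this.congr_deriv ?_; ring
  have htend : Tendsto (fun y : ℝ => -Real.exp (-y/2)) atTop (nhds 0) := by
    have h1 : Tendsto (fun y : ℝ => Real.exp (-(y/2))) atTop (nhds 0) :=
      Real.tendsto_exp_neg_atTop_nhds_zero.comp (tendsto_id.atTop_div_const two_pos)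
    have := h1.neg
    rw [neg_zero] at this
    refine this.congr fun y => ?_
    rw [neg_div]
  have := integral_Ioi_of_hasDerivAt_of_tendsto' hderiv (integrableOn_exp_tail a) htend
  rw [this]
  ring


/-- The exponential distribution with rate 1/2 (i.e. chi-squared with 2 df). -/
def expM : Measure ℝ :=
  (volume.restrict (Set.Ioi (0:ℝ))).withDensity (fun x => ENNReal.ofReal (Real.exp (-x/2) / 2))

lemma expM_apply {s : Set ℝ} (hs : MeasurableSet s) :
    expM s = ∫⁻ x in s ∩ Ioi 0, ENNReal.ofReal (Real.exp (-x/2) / 2) := by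
  rw [expM, withDensity_apply _ hs, Measure.restrict_restrict hs]

lemma expM_Ioi {u : ℝ} (hu : 0 ≤ u) : expM (Ioi u) = ENNReal.ofReal (Real.exp (-u/2)) := by
  rw [expM_apply measurableSet_Ioi]
  have h1 : Ioi u ∩ Ioi (0:ℝ) = Ioi u := by
    rw [Set.Ioi_inter_Ioi, max_eq_left hu]
  rw [h1, ← ofReal_integral_eq_lintegral_ofReal (integrableOn_exp_tail u)
    (ae_of_all _ fun x => by positivity), integral_exp_tail]

instance : IsProbabilityMeasure expM := by
  constructor
  have h1 : expM (Iic (0:ℝ)) = 0 := by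
    rw [expM_apply measurableSet_Iic]
    have h2 : Iic (0:ℝ) ∩ Ioi 0 = ∅ := by
      ext x; simp only [mem_inter_iff, mem_Iic, mem_Ioi, mem_empty_iff_false, iff_false]
      intro h; linarith [h.1, h.2]
    rw [h2]
    simp
  have hd : Disjoint (Iic (0:ℝ)) (Ioi 0) :=
    Set.disjoint_left.mpr fun x hx hx' => absurd (mem_Iic.mp hx) (not_le.mpr hx')
  rw [← Set.Iic_union_Ioi (a := (0:ℝ)), measure_union hd measurableSet_Ioi, h1, expM_Ioi le_rfl,
    zero_add]
  norm_num



lemma continuous_fisherPhi (m : ℕ) : Continuous (fisherPhi m) := by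
  unfold fisherPhi
  exact continuous_finset_sum _ fun k _ => continuous_fTerm k

lemma measurable_fisherH (m : ℕ) : Measurable (fisherH m) :=
  Measurable.ite (measurableSet_le measurable_id measurable_const) measurable_const
    (continuous_fisherPhi m).measurable

lemma fisherH_nonneg (m : ℕ) (f : ℝ) : 0 ≤ fisherH m f := by
  unfold fisherH
  split
  · norm_num
  · exact fisherPhi_nonneg (le_of_not_ge (by assumption))

lemma antitoneOn_fisherPhi (m : ℕ) : AntitoneOn (fisherPhi (m+1)) (Ici 0) := by
  apply antitoneOn_of_deriv_nonpos (convex_Ici 0) (continuous_fisherPhi (m+1)).continuousOn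
  · intro x _
    exact (hasDerivAt_fisherPhi m x).differentiableAt.differentiableWithinAt
  · intro x hx
    rw [interior_Ici] at hx
    rw [(hasDerivAt_fisherPhi m x).deriv]
    have := fTerm_nonneg (k := m) (le_of_lt hx)
    linarith

lemma fisherH_antitone (m : ℕ) : Antitone (fisherH m) := by
  intro a b hab
  unfold fisherH
  by_cases hb : b ≤ 0
  · rw [if_pos hb, if_pos (hab.trans hb)]
  · rw [if_neg hb]
    push_neg at hb
    by_cases ha : a ≤ 0
    · rw [if_pos ha]
      cases m with
      | zero => simp [fisherPhi]
      | succ m' =>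
        have h := antitoneOn_fisherPhi m' (self_mem_Ici) (mem_Ici.mpr hb.le) hb.le
        rw [fisherPhi_zero] at h
        exact h
    · rw [if_neg ha]
      push_neg at ha
      cases m with
      | zero => simp [fisherPhi]
      | succ m' => exact antitoneOn_fisherPhi m' (mem_Ici.mpr ha.le) (mem_Ici.mpr (ha.trans_le hab).le) hab

lemma fisherH_le_one (m : ℕ) (f : ℝ) : fisherH m f ≤ 1 := by
  by_cases hf : f ≤ 0
  · rw [fisherH, if_pos hf]
  · push_neg at hf
    have h := fisherH_antitone m hf.le
    have h0 : fisherH m 0 = 1 := by rw [fisherH, if_pos le_rfl]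
    rw [h0] at h
    exact h

lemma fisherH_eq_phi {m : ℕ} {f : ℝ} (hf : 0 ≤ f) : fisherH (m+1) f = fisherPhi (m+1) f := by
  rcases eq_or_lt_of_le hf with h | h
  · rw [fisherH, ← h, if_pos le_rfl, fisherPhi_zero]
  · rw [fisherH, if_neg (not_le.mpr h)]



/-- Stochastic dominance: integrals of monotone nonneg functions against a subexponential
law are bounded by the Exp(1/2) integral. -/
lemma lintegral_le_expM {Ω : Type*} [MeasurableSpace Ω] (μ : Measure Ω) [IsProbabilityMeasure μ]
    (Y : Ω → ℝ) (hY : Measurable Y) (hY0 : ∀ ω, 0 ≤ Y ω)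
    (htail : ∀ x : ℝ, 0 ≤ x → μ {ω | x ≤ Y ω} ≤ ENNReal.ofReal (Real.exp (-x/2)))
    {g : ℝ → ℝ} (hg : Monotone g) (hgm : Measurable g) (hg0 : ∀ x, 0 ≤ g x) :
    ∫⁻ ω, ENNReal.ofReal (g (Y ω)) ∂μ ≤ ∫⁻ x, ENNReal.ofReal (g x) ∂expM := by
  rw [lintegral_eq_lintegral_meas_lt μ (ae_of_all _ fun ω => hg0 _) (hgm.comp hY).aemeasurable,
      lintegral_eq_lintegral_meas_lt expM (ae_of_all _ fun x => hg0 x) hgm.aemeasurable]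
  apply setLIntegral_mono' measurableSet_Ioi
  intro t _
  by_cases hne : ∃ x, 0 ≤ x ∧ t < g x
  · obtain ⟨x₀, hx₀, hgx₀⟩ := hne
    set A := {x : ℝ | t < g x} ∩ Ici 0 with hA
    have hAne : A.Nonempty := ⟨x₀, hgx₀, hx₀⟩
    have hbdd : BddBelow A := ⟨0, fun x hx => hx.2⟩
    have hu0 : 0 ≤ sInf A := le_csInf hAne fun x hx => hx.2
    calc μ {ω | t < g (Y ω)} ≤ μ {ω | sInf A ≤ Y ω} := by
          apply measure_mono
          intro ω hω
          exact csInf_le hbdd ⟨hω, hY0 ω⟩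
      _ ≤ ENNReal.ofReal (Real.exp (-(sInf A)/2)) := htail _ hu0
      _ = expM (Ioi (sInf A)) := (expM_Ioi hu0).symm
      _ ≤ expM {x | t < g x} := by
          apply measure_mono
          intro x hx
          obtain ⟨z, hz, hzx⟩ := exists_lt_of_csInf_lt hAne hx
          exact lt_of_lt_of_le hz.1 (hg hzx.le)
  · push_neg at hne
    have he : {ω | t < g (Y ω)} = ∅ := by
      ext ω
      simp only [mem_setOf_eq, mem_empty_iff_false, iff_false, not_lt]
      exact hne (Y ω) (hY0 ω)
    rw [he, measure_empty]
    exact _root_.zero_le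

/-- The convolution step: integrating the chi-squared 2m tail against Exp(1/2) gives the
chi-squared 2(m+1) tail. -/
lemma lintegral_fisherH_expM (m : ℕ) {f : ℝ} (hf : 0 < f) :
    ∫⁻ x, ENNReal.ofReal (fisherH m (f - x)) ∂expM = ENNReal.ofReal (fisherPhi (m+1) f) := by
  have hHm : Measurable fun x : ℝ => ENNReal.ofReal (fisherH m (f - x)) :=
    ENNReal.measurable_ofReal.comp ((measurable_fisherH m).comp (measurable_const.sub measurable_id))
  have hdm : Measurable fun x : ℝ => ENNReal.ofReal (Real.exp (-x/2) / 2) := by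
    apply ENNReal.measurable_ofReal.comp
    exact (Real.measurable_exp.comp (measurable_id.neg.div_const 2)).div_const 2
  rw [expM, lintegral_withDensity_eq_lintegral_mul _ hdm hHm]
  have hpoint : (fun a : ℝ => ENNReal.ofReal (Real.exp (-a/2)/2)
      * ENNReal.ofReal (fisherH m (f - a)))
      = fun x : ℝ => ENNReal.ofReal (Real.exp (-x/2)/2 * fisherH m (f - x)) := by
    funext x
    rw [← ENNReal.ofReal_mul (by positivity)]
  simp only [Pi.mul_apply]
  rw [hpoint]
  -- pass to a Bochner integral
  have hGm : Measurable fun x : ℝ => Real.exp (-x/2)/2 * fisherH m (f - x) :=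
    ((Real.measurable_exp.comp (measurable_id.neg.div_const 2)).div_const 2).mul
      ((measurable_fisherH m).comp (measurable_const.sub measurable_id))
  have hGint : IntegrableOn (fun x : ℝ => Real.exp (-x/2)/2 * fisherH m (f - x)) (Ioi 0) := by
    apply Integrable.mono (integrableOn_exp_tail 0) hGm.aestronglyMeasurable
    refine ae_of_all _ fun x => ?_
    rw [Real.norm_eq_abs, Real.norm_eq_abs,
      abs_of_nonneg (mul_nonneg (by positivity) (fisherH_nonneg m _)),
      abs_of_nonneg (by positivity : (0:ℝ) ≤ Real.exp (-x/2)/2)]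
    calc Real.exp (-x/2)/2 * fisherH m (f - x) ≤ Real.exp (-x/2)/2 * 1 :=
          mul_le_mul_of_nonneg_left (fisherH_le_one m _) (by positivity)
      _ = Real.exp (-x/2)/2 := mul_one _
  rw [← ofReal_integral_eq_lintegral_ofReal hGint
    (ae_of_all _ fun x => mul_nonneg (by positivity) (fisherH_nonneg m _))]
  congr 1
  -- now the real computation
  have hsplit : Ioo (0:ℝ) f ∪ Ici f = Ioi 0 := Ioo_union_Ici_eq_Ioi hf
  have hdisj : Disjoint (Ioo (0:ℝ) f) (Ici f) := by
    refine Set.disjoint_left.mpr fun x hx hx' => ?_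
    exact absurd (mem_Ici.mp hx') (not_le.mpr hx.2)
  rw [← hsplit, setIntegral_union hdisj measurableSet_Ici
    (hGint.mono_set (hsplit ▸ Set.subset_union_left))
    (hGint.mono_set (hsplit ▸ Set.subset_union_right))]
  have hIci : ∫ x in Ici f, Real.exp (-x/2)/2 * fisherH m (f - x) = fTerm 0 f := by
    have hc : EqOn (fun x : ℝ => Real.exp (-x/2)/2 * fisherH m (f - x))
        (fun x : ℝ => Real.exp (-x/2)/2) (Ici f) := by
      intro x hx
      have : f - x ≤ 0 := by simp only [mem_Ici] at hx; linarith
      simp only [fisherH, if_pos this, mul_one]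
    rw [setIntegral_congr_fun measurableSet_Ici hc, integral_Ici_eq_integral_Ioi,
      integral_exp_tail]
    simp [fTerm]
  have hIoo : ∫ x in Ioo 0 f, Real.exp (-x/2)/2 * fisherH m (f - x)
      = ∑ k ∈ Finset.range m, fTerm (k+1) f := by
    have hc : EqOn (fun x : ℝ => Real.exp (-x/2)/2 * fisherH m (f - x))
        (fun x : ℝ => ∑ k ∈ Finset.range m,
          (Real.exp (-f/2) / (2 * (k ! : ℝ))) * ((f - x)/2)^k) (Ioo 0 f) := by
      intro x hx
      obtain ⟨hx0, hxf⟩ := hx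
      have hpos : 0 < f - x := by linarith
      simp only [fisherH, if_neg (not_le.mpr hpos), fisherPhi, Finset.mul_sum]
      refine Finset.sum_congr rfl fun k _ => ?_
      unfold fTerm
      have hexp : Real.exp (-x/2) * Real.exp (-(f-x)/2) = Real.exp (-f/2) := by
        rw [← Real.exp_add]; congr 1; ring
      rw [← hexp]
      ring
    rw [setIntegral_congr_fun measurableSet_Ioo hc, ← integral_Ioc_eq_integral_Ioo,
      ← intervalIntegral.integral_of_le hf.le,
      intervalIntegral.integral_finset_sum]
    · refine Finset.sum_congr rfl fun k _ => ?_
      rw [intervalIntegral.integral_const_mul]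
      have h1 : (∫ x in (0:ℝ)..f, ((f - x)/2)^k)
          = ∫ x in (0:ℝ)..f, (x/2)^k := by
        rw [intervalIntegral.integral_comp_sub_left (fun u : ℝ => (u/2)^k) f]
        norm_num
      have h2 : (∫ x in (0:ℝ)..f, (x/2)^k) = 2 * ((f/2)^(k+1)) / (k+1) := by
        rw [show (fun x : ℝ => (x/2)^k) = fun x : ℝ => (fun y : ℝ => y^k) (x/2) from rfl,
          intervalIntegral.integral_comp_div (fun y : ℝ => y^k) two_ne_zero,
          integral_pow]
        norm_num
        ring
      rw [h1, h2]
      unfold fTerm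
      have hfact : ((k+1)! : ℝ) = (k+1) * (k ! : ℝ) := by
        rw [Nat.factorial_succ]; push_cast; ring
      rw [hfact]
      field_simp
    · intro k _
      apply Continuous.intervalIntegrable
      continuity
  rw [hIoo, hIci, fisherPhi, Finset.sum_range_succ']



/-- Key induction: tails of sums of independent subexponential random variables are
bounded by chi-squared tails. -/
lemma fisher_main {Ω : Type*} [MeasurableSpace Ω] (μ : Measure Ω) [IsProbabilityMeasure μ]
    {n : ℕ} (X : Fin n → Ω → ℝ) (hXm : ∀ i, Measurable (X i)) (hX0 : ∀ i ω, 0 ≤ X i ω)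
    (htail : ∀ i (x : ℝ), 0 ≤ x → μ {ω | x ≤ X i ω} ≤ ENNReal.ofReal (Real.exp (-x/2)))
    (hind : ProbabilityTheory.iIndepFun X μ) :
    ∀ (s : Finset (Fin n)) (f : ℝ),
      μ {ω | f ≤ ∑ i ∈ s, X i ω} ≤ ENNReal.ofReal (fisherH s.card f) := by
  intro s
  induction s using Finset.induction_on with
  | empty =>
    intro f
    by_cases hf : f ≤ 0
    · simp only [Finset.card_empty, fisherH, if_pos hf]
      rw [ENNReal.ofReal_one]
      exact prob_le_one
    · push_neg at hf
      have he : {ω : Ω | f ≤ ∑ i ∈ (∅ : Finset (Fin n)), X i ω} = ∅ := by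
        ext ω
        simp only [Finset.sum_empty, mem_setOf_eq, mem_empty_iff_false, iff_false, not_le]
        exact hf
      rw [he, measure_empty]
      exact _root_.zero_le
  | @insert j s' hj ih =>
    intro f
    by_cases hf : f ≤ 0
    · calc μ {ω | f ≤ ∑ i ∈ insert j s', X i ω} ≤ 1 := prob_le_one
        _ = ENNReal.ofReal (fisherH (insert j s').card f) := by
            rw [fisherH, if_pos hf, ENNReal.ofReal_one]
    · push_neg at hf
      set m := s'.card with hm
      set Y := X j with hY
      set S := fun ω => ∑ i ∈ s', X i ω with hS
      have hYm : Measurable Y := hXm j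
      have hSm : Measurable S := Finset.measurable_sum s' fun i _ => hXm i
      have hSeq : S = ∑ i ∈ s', X i := by
        funext ω
        rw [Finset.sum_apply]
      have hIndep : ProbabilityTheory.IndepFun Y S μ := by
        rw [hSeq]
        exact (hind.indepFun_finset_sum_of_notMem hXm hj).symm
      have hmap : μ.map (fun ω => (Y ω, S ω)) = (μ.map Y).prod (μ.map S) :=
        (ProbabilityTheory.indepFun_iff_map_prod_eq_prod_map_map hYm.aemeasurable
          hSm.aemeasurable).mp hIndep
      have hsetm : MeasurableSet {p : ℝ × ℝ | f ≤ p.1 + p.2} :=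
        measurableSet_le measurable_const (measurable_fst.add measurable_snd)
      have h1 : μ {ω | f ≤ ∑ i ∈ insert j s', X i ω}
          = μ.map (fun ω => (Y ω, S ω)) {p : ℝ × ℝ | f ≤ p.1 + p.2} := by
        rw [Measure.map_apply (hYm.prodMk hSm) hsetm]
        congr 1
        ext ω
        simp only [mem_setOf_eq, mem_preimage, Finset.sum_insert hj, hY, hS]
      rw [h1, hmap, Measure.prod_apply hsetm]
      have h2 : ∀ y : ℝ, (Prod.mk y ⁻¹' {p : ℝ × ℝ | f ≤ p.1 + p.2}) = Ici (f - y) := by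
        intro y
        ext x
        simp only [mem_preimage, mem_setOf_eq, mem_Ici]
        constructor <;> intro h <;> linarith
      calc ∫⁻ y, (μ.map S) (Prod.mk y ⁻¹' {p : ℝ × ℝ | f ≤ p.1 + p.2}) ∂(μ.map Y)
          ≤ ∫⁻ y, ENNReal.ofReal (fisherH m (f - y)) ∂(μ.map Y) := by
            apply lintegral_mono
            intro y
            dsimp only
            rw [h2 y, Measure.map_apply hSm measurableSet_Ici]
            have h3 : S ⁻¹' Ici (f - y) = {ω | f - y ≤ ∑ i ∈ s', X i ω} := rfl
            rw [h3]
            exact ih (f - y)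
        _ = ∫⁻ ω, ENNReal.ofReal (fisherH m (f - Y ω)) ∂μ := by
            have hgm : Measurable fun y : ℝ => ENNReal.ofReal (fisherH m (f - y)) :=
              ENNReal.measurable_ofReal.comp
                ((measurable_fisherH m).comp (measurable_const.sub measurable_id))
            rw [lintegral_map hgm hYm]
        _ ≤ ∫⁻ x, ENNReal.ofReal (fisherH m (f - x)) ∂expM := by
            apply lintegral_le_expM μ Y hYm (fun ω => hX0 j ω) (htail j)
              (g := fun y => fisherH m (f - y))
            · intro a b hab
              exact fisherH_antitone m (by linarith : f - b ≤ f - a)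
            · exact (measurable_fisherH m).comp (measurable_const.sub measurable_id)
            · exact fun x => fisherH_nonneg m _
        _ = ENNReal.ofReal (fisherPhi (m+1) f) := lintegral_fisherH_expM m hf
        _ = ENNReal.ofReal (fisherH (insert j s').card f) := by
            rw [Finset.card_insert_of_notMem hj, ← hm, fisherH_eq_phi hf.le]

/-- Fisher's method: if `p_1, ..., p_n` are independent superuniform (valid) P-values,
then the Fisher statistic `F = -2 Σ log p_i` is stochastically dominated by a
chi-squared distribution with `2n` degrees of freedom:
`Pr[F ≥ f] ≤ Pr[χ²_{2n} ≥ f]` for all `f ≥ 0`. -/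
theorem fisher_method {Ω : Type*} {m0 : MeasurableSpace Ω}
    (μ : Measure Ω) [IsProbabilityMeasure μ] (n : ℕ) (hn : 1 ≤ n)
    (p : Fin n → Ω → ℝ) (hmeas : ∀ i, Measurable (p i))
    (hrange : ∀ i ω, p i ω ∈ Set.Icc (0:ℝ) 1)
    (hsuper : ∀ i, ∀ u ∈ Set.Icc (0:ℝ) 1, μ {ω | p i ω ≤ u} ≤ ENNReal.ofReal u)
    (hindep : ProbabilityTheory.iIndepFun p μ) :
    ∀ f : ℝ, 0 ≤ f →
      (μ {ω | f ≤ -2 * ∑ i, Real.log (p i ω)}).toReal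
        ≤ ∫ t in Set.Ici f, t ^ (n - 1) * Real.exp (-t / 2) / (2 ^ n * ((n - 1)! : ℝ)) := by
  intro f hf
  obtain ⟨m, rfl⟩ : ∃ m, n = m + 1 := ⟨n - 1, (Nat.succ_pred_eq_of_pos hn).symm⟩
  set X : Fin (m+1) → Ω → ℝ := fun i ω => -2 * Real.log (p i ω) with hX
  have hXm : ∀ i, Measurable (X i) :=
    fun i => measurable_const.mul (Real.measurable_log.comp (hmeas i))
  have hX0 : ∀ i ω, 0 ≤ X i ω := by
    intro i ω
    have := Real.log_nonpos (hrange i ω).1 (hrange i ω).2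
    simp only [hX]
    linarith
  have htail : ∀ i (x : ℝ), 0 ≤ x → μ {ω | x ≤ X i ω} ≤ ENNReal.ofReal (Real.exp (-x/2)) := by
    intro i x hx
    have hsub : {ω | x ≤ X i ω} ⊆ {ω | p i ω ≤ Real.exp (-x/2)} := by
      intro ω hω
      simp only [mem_setOf_eq, hX] at hω ⊢
      rcases eq_or_lt_of_le (hrange i ω).1 with h0 | h0
      · rw [← h0]
        exact (Real.exp_pos _).le
      · have hlog : Real.log (p i ω) ≤ -x/2 := by linarith
        calc p i ω = Real.exp (Real.log (p i ω)) := (Real.exp_log h0).symm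
          _ ≤ Real.exp (-x/2) := Real.exp_le_exp.mpr hlog
    refine le_trans (measure_mono hsub) ?_
    refine hsuper i _ ⟨(Real.exp_pos _).le, ?_⟩
    have h1 := Real.exp_le_exp.mpr (show -x/2 ≤ 0 by linarith)
    simpa using h1
  have hXind : ProbabilityTheory.iIndepFun X μ :=
    hindep.comp (fun _ => fun x : ℝ => -2 * Real.log x)
      (fun _ => measurable_const.mul Real.measurable_log)
  have key := fisher_main μ X hXm hX0 htail hXind Finset.univ f
  rw [Finset.card_univ, Fintype.card_fin, fisherH_eq_phi hf] at key
  have hset : {ω | f ≤ -2 * ∑ i, Real.log (p i ω)} = {ω | f ≤ ∑ i, X i ω} := by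
    ext ω
    simp only [mem_setOf_eq, hX, Finset.mul_sum]
  rw [hset]
  have hRHS : (∫ t in Set.Ici f, t ^ (m+1-1) * Real.exp (-t / 2) / (2 ^ (m+1) * ((m+1-1)! : ℝ)))
      = fisherPhi (m+1) f := by
    have heq : (fun t : ℝ => t ^ (m+1-1) * Real.exp (-t / 2) / (2 ^ (m+1) * ((m+1-1)! : ℝ)))
        = fun t : ℝ => fTerm m t / 2 := by
      funext t
      simp only [Nat.add_sub_cancel]
      unfold fTerm
      rw [div_pow]
      have h2 : ((2:ℝ))^(m+1) = 2^m * 2 := by ring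
      field_simp
      ring
    rw [heq, integral_Ici_eq_integral_Ioi, integral_fisher_tail]
  rw [hRHS]
  exact ENNReal.toReal_le_of_le_ofReal (fisherPhi_nonneg hf) key

end
end FisherProof
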